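/- Let 0 ≤ δ < 1/4 and let (H₁, H₂, H₃) be a δ-representation of the sphere by n×n complex matrices. If every entry of each matrix H₁, H₂, H₃ is a real number, then bott(H₁, H₂, H₃) = 0. -/

import Mathlib

open Matrix

noncomputable section

namespace AC

variable {m : Type*} [Fintype m] [DecidableEq m]

/-- The ℓ² operator norm of a complex matrix. -/
def opNorm (A : Matrix m m ℂ) : ℝ :=
  ‖Matrix.toEuclideanCLM (𝕜 := ℂ) A‖

/-- `(H₁, H₂, H₃)` is a δ-representation of the sphere: each `Hᵣ` is Hermitian, all
commutators have ℓ²-operator norm at most `δ`, and `‖H₁² + H₂² + H₃² − I‖ ≤ δ`. -/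
def IsSphereRep (δ : ℝ) (H₁ H₂ H₃ : Matrix m m ℂ) : Prop :=
  H₁.IsHermitian ∧ H₂.IsHermitian ∧ H₃.IsHermitian ∧
  opNorm (H₁ * H₂ - H₂ * H₁) ≤ δ ∧
  opNorm (H₁ * H₃ - H₃ * H₁) ≤ δ ∧
  opNorm (H₂ * H₃ - H₃ * H₂) ≤ δ ∧
  opNorm (H₁ ^ 2 + H₂ ^ 2 + H₃ ^ 2 - 1) ≤ δ

/-- The 2n×2n Hermitian block matrix `S(H₁,H₂,H₃) = [[H₃, H₁ − iH₂], [H₁ + iH₂, −H₃]]`. -/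
def sphS (H₁ H₂ H₃ : Matrix m m ℂ) : Matrix (m ⊕ m) (m ⊕ m) ℂ :=
  Matrix.fromBlocks H₃ (H₁ - Complex.I • H₂) (H₁ + Complex.I • H₂) (-H₃)

open Classical in
/-- The Bott index: the number of positive eigenvalues (with multiplicity) of
`S(H₁,H₂,H₃)` minus `n`.  (Junk value `0` if `S(H₁,H₂,H₃)` is not Hermitian.) -/
def bott (H₁ H₂ H₃ : Matrix m m ℂ) : ℤ :=
  if h : (sphS H₁ H₂ H₃).IsHermitian then
    ((Finset.univ.filter fun i => 0 < h.eigenvalues i).card : ℤ) - Fintype.card m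
  else 0

end AC


open Polynomial in
theorem AC.charpoly_conj_aux {k : Type*} [Fintype k] [DecidableEq k] {R : Type*} [CommRing R]
    (V W M : Matrix k k R) (h : V * W = 1) :
    (V * M * W).charpoly = M.charpoly := by
  have hmap : (V.map C) * (W.map C) = 1 := by
    rw [← Matrix.map_mul, h, Matrix.map_one _ C.map_zero C.map_one]
  have hc : charmatrix (V * M * W) = V.map C * charmatrix M * W.map C := by
    rw [charmatrix, charmatrix, Matrix.mul_sub, Matrix.sub_mul]
    congr 1
    · rw [← (scalar_commute (X : R[X]) (fun r => Commute.all _ r) (V.map C)).eq, Matrix.mul_assoc,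
        hmap, Matrix.mul_one]
    · simp only [RingHom.mapMatrix_apply, ← Matrix.map_mul]
  rw [Matrix.charpoly, hc, det_mul, det_mul, Matrix.charpoly, mul_comm (V.map C).det,
    mul_assoc, ← det_mul, hmap, det_one, mul_one]

open Polynomial in
theorem AC.charpoly_diagonal_aux {k : Type*} [Fintype k] [DecidableEq k] {R : Type*} [CommRing R]
    (d : k → R) :
    (Matrix.diagonal d).charpoly = ∏ i, (X - C (d i)) := by
  have : charmatrix (Matrix.diagonal d) = Matrix.diagonal (fun i => X - C (d i)) := by
    ext i j
    by_cases hij : i = j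
    · subst hij; simp
    · simp [hij, charmatrix_apply, Matrix.diagonal_apply_ne _ hij]
  rw [Matrix.charpoly, this, det_diagonal]

open Polynomial in
theorem AC.charpoly_hermitian_aux {k : Type*} [Fintype k] [DecidableEq k]
    {A : Matrix k k ℂ} (hA : A.IsHermitian) :
    A.charpoly = ∏ i, (X - C (hA.eigenvalues i : ℂ)) := by
  have hU := hA.spectral_theorem
  have hu : (hA.eigenvectorUnitary : Matrix k k ℂ) * (star hA.eigenvectorUnitary : Matrix k k ℂ) = 1 :=
    (Matrix.mem_unitaryGroup_iff).mp hA.eigenvectorUnitary.2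
  calc A.charpoly = ((hA.eigenvectorUnitary : Matrix k k ℂ) *
        Matrix.diagonal (RCLike.ofReal ∘ hA.eigenvalues) *
        (star hA.eigenvectorUnitary : Matrix k k ℂ)).charpoly := by
          rw [← Unitary.conjStarAlgAut_apply (S := ℂ), ← hU]
    _ = (Matrix.diagonal (RCLike.ofReal ∘ hA.eigenvalues)).charpoly :=
        AC.charpoly_conj_aux _ _ _ hu
    _ = ∏ i, (X - C (hA.eigenvalues i : ℂ)) := AC.charpoly_diagonal_aux _

open Polynomial in
theorem AC.charpoly_neg_aux {k : Type*} [Fintype k] [DecidableEq k] {R : Type*} [CommRing R]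
    (M : Matrix k k R) :
    (-M).charpoly = (-1 : R[X])^(Fintype.card k) * Polynomial.aeval (-X : R[X]) M.charpoly := by
  have hmap : (charmatrix M).map (Polynomial.aeval (-X : R[X])).toRingHom
      = - charmatrix (-M) := by
    ext i j
    by_cases hij : i = j
    · subst hij
      simp [charmatrix_apply_eq, map_sub, aeval_X, aeval_C]
      ring
    · simp [charmatrix_apply_ne _ _ _ hij, aeval_C]
  have h := RingHom.map_det (Polynomial.aeval (-X : R[X])).toRingHom (charmatrix M)
  rw [RingHom.mapMatrix_apply, hmap, Matrix.det_neg] at h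
  have hsq : ((-1 : R[X])^(Fintype.card k)) * ((-1 : R[X])^(Fintype.card k)) = 1 := by
    rw [← mul_pow]; norm_num
  rw [Matrix.charpoly, Matrix.charpoly]
  have h' : (Polynomial.aeval (-X : R[X])) (charmatrix M).det
      = (-1 : R[X])^(Fintype.card k) * (charmatrix (-M)).det := h
  rw [h', ← mul_assoc, hsq, one_mul]

open Polynomial in
theorem AC.eig_symm_aux {k : Type*} [Fintype k] [DecidableEq k] {A : Matrix k k ℂ}
    (hA : A.IsHermitian)
    (hsame : (-A).charpoly = A.charpoly) :
    (Finset.univ.val.map hA.eigenvalues) =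
      (Finset.univ.val.map hA.eigenvalues).map (fun a => -a) := by
  have hch : A.charpoly = ∏ i, (X - C (hA.eigenvalues i : ℂ)) := AC.charpoly_hermitian_aux hA
  have hneg := AC.charpoly_neg_aux A
  have h1 : Polynomial.aeval (-X : ℂ[X]) A.charpoly
      = (-1 : ℂ[X])^(Fintype.card k) * ∏ i, (X - C ((-(hA.eigenvalues i) : ℝ) : ℂ)) := by
    rw [hch, map_prod]
    have he : ∀ i : k, (Polynomial.aeval (-X : ℂ[X])) (X - C ((hA.eigenvalues i : ℝ) : ℂ))
        = (-1 : ℂ[X]) * (X - C ((-(hA.eigenvalues i) : ℝ) : ℂ)) := by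
      intro i
      push_cast
      simp only [map_sub, aeval_X, aeval_C, Polynomial.algebraMap_eq, map_neg]
      ring
    rw [Finset.prod_congr rfl (fun i _ => he i), Finset.prod_mul_distrib, Finset.prod_const,
      Finset.card_univ]
  have h2 := hneg
  rw [hsame, h1, ← mul_assoc, ← mul_pow] at h2
  norm_num at h2
  rw [hch] at h2
  have key : (∏ i, (X - C ((hA.eigenvalues i : ℝ) : ℂ)))
      = ∏ i, (X - C ((-(hA.eigenvalues i) : ℝ) : ℂ)) := by
    rw [h2]
    apply Finset.prod_congr rfl
    intro i _
    push_cast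
    rw [map_neg, sub_neg_eq_add]
  have hroots := congrArg Polynomial.roots key
  rw [show (∏ i, (X - C ((hA.eigenvalues i : ℝ) : ℂ)))
      = ((Finset.univ.val.map fun i => ((hA.eigenvalues i : ℝ) : ℂ)).map fun a => X - C a).prod by
    rw [Multiset.map_map]; rfl] at hroots
  rw [show (∏ i, (X - C ((-(hA.eigenvalues i) : ℝ) : ℂ)))
      = ((Finset.univ.val.map fun i => ((-(hA.eigenvalues i) : ℝ) : ℂ)).map fun a => X - C a).prod by
    rw [Multiset.map_map]; rfl] at hroots
  rw [roots_multiset_prod_X_sub_C, roots_multiset_prod_X_sub_C] at hroots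
  have h3 : ((Finset.univ.val.map hA.eigenvalues).map (fun a : ℝ => (a : ℂ)))
      = (((Finset.univ.val.map hA.eigenvalues).map (fun a : ℝ => -a)).map (fun a : ℝ => (a : ℂ))) := by
    rw [Multiset.map_map, Multiset.map_map, Multiset.map_map]
    convert hroots using 2
    all_goals rfl
  exact Multiset.map_injective Complex.ofReal_injective h3

theorem AC.count_pos_aux (N : Multiset ℝ) (hsym : N = N.map (fun a => -a))
    (h0 : ∀ a ∈ N, a ≠ 0) :
    2 * N.countP (fun a => 0 < a) = Multiset.card N := by
  have h1 : N.countP (fun a => 0 < a) = N.countP (fun a => a < 0) := by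
    conv_lhs => rw [hsym]
    rw [Multiset.countP_map, Multiset.countP_eq_card_filter]
    congr 1
    apply Multiset.filter_congr
    intro a _
    simp [neg_pos]
  have h2 := Multiset.card_eq_countP_add_countP (fun a => 0 < a) N
  have h3 : N.countP (fun a => ¬ 0 < a) = N.countP (fun a => a < 0) := by
    apply Multiset.countP_congr rfl
    intro a ha
    have := h0 a ha
    apply propext
    constructor <;> intro h
    · exact lt_of_le_of_ne (not_lt.mp h) this
    · exact not_lt.mpr h.le
  omega

namespace AC

variable {m : Type*} [Fintype m] [DecidableEq m]

omit [DecidableEq m] in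
theorem sphS_isHermitian {H₁ H₂ H₃ : Matrix m m ℂ} (h₁ : H₁.IsHermitian)
    (h₂ : H₂.IsHermitian) (h₃ : H₃.IsHermitian) : (sphS H₁ H₂ H₃).IsHermitian := by
  unfold sphS Matrix.IsHermitian
  rw [fromBlocks_conjTranspose]
  rw [conjTranspose_sub, conjTranspose_add, conjTranspose_smul, conjTranspose_neg,
    h₁.eq, h₂.eq, h₃.eq]
  simp [Complex.conj_I, sub_eq_add_neg, neg_smul]

omit [Fintype m] [DecidableEq m] in
theorem sphS_map_conj {H₁ H₂ H₃ : Matrix m m ℂ}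
    (r₁ : H₁.map (starRingEnd ℂ) = H₁) (r₂ : H₂.map (starRingEnd ℂ) = H₂)
    (r₃ : H₃.map (starRingEnd ℂ) = H₃) :
    (sphS H₁ H₂ H₃).map (starRingEnd ℂ)
      = fromBlocks H₃ (H₁ + Complex.I • H₂) (H₁ - Complex.I • H₂) (-H₃) := by
  have e₁₂ : (H₁ - Complex.I • H₂).map (starRingEnd ℂ) = H₁ + Complex.I • H₂ := by
    ext i j
    have a1 := congrFun (congrFun r₁ i) j
    have a2 := congrFun (congrFun r₂ i) j
    simp only [Matrix.map_apply, Matrix.sub_apply, Matrix.add_apply, Matrix.smul_apply,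
      map_sub, _root_.map_mul, Complex.conj_I, smul_eq_mul] at *
    rw [a1, a2]; ring
  have e₂₁ : (H₁ + Complex.I • H₂).map (starRingEnd ℂ) = H₁ - Complex.I • H₂ := by
    ext i j
    have a1 := congrFun (congrFun r₁ i) j
    have a2 := congrFun (congrFun r₂ i) j
    simp only [Matrix.map_apply, Matrix.sub_apply, Matrix.add_apply, Matrix.smul_apply,
      map_add, _root_.map_mul, Complex.conj_I, smul_eq_mul] at *
    rw [a1, a2]; ring
  have e₂₂ : (-H₃).map (starRingEnd ℂ) = -H₃ := by
    ext i j
    have a3 := congrFun (congrFun r₃ i) j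
    simp only [Matrix.map_apply, Matrix.neg_apply, map_neg] at *
    rw [a3]
  unfold sphS
  rw [fromBlocks_map, r₃, e₁₂, e₂₁, e₂₂]

theorem sphS_neg_conj {H₁ H₂ H₃ : Matrix m m ℂ}
    (r₁ : H₁.map (starRingEnd ℂ) = H₁) (r₂ : H₂.map (starRingEnd ℂ) = H₂)
    (r₃ : H₃.map (starRingEnd ℂ) = H₃) :
    (fromBlocks (0 : Matrix m m ℂ) (1 : Matrix m m ℂ) (-1 : Matrix m m ℂ) (0 : Matrix m m ℂ)) *
        ((sphS H₁ H₂ H₃).map (starRingEnd ℂ)) *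
      (fromBlocks (0 : Matrix m m ℂ) (-1 : Matrix m m ℂ) (1 : Matrix m m ℂ) (0 : Matrix m m ℂ))
      = -(sphS H₁ H₂ H₃) := by
  rw [sphS_map_conj r₁ r₂ r₃]
  unfold sphS
  rw [fromBlocks_multiply, fromBlocks_multiply,
    show -fromBlocks H₃ (H₁ - Complex.I • H₂) (H₁ + Complex.I • H₂) (-H₃)
      = fromBlocks (-H₃) (-(H₁ - Complex.I • H₂)) (-(H₁ + Complex.I • H₂)) (-(-H₃)) from
    (fromBlocks_neg _ _ _ _)]
  congr 1 <;> simp [smul_smul]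

theorem VW_mul_one : (fromBlocks (0 : Matrix m m ℂ) (1 : Matrix m m ℂ) (-1 : Matrix m m ℂ)
      (0 : Matrix m m ℂ)) *
    (fromBlocks (0 : Matrix m m ℂ) (-1 : Matrix m m ℂ) (1 : Matrix m m ℂ) (0 : Matrix m m ℂ))
      = 1 := by
  rw [fromBlocks_multiply]
  simp [← fromBlocks_one]

theorem norm_mulVec_le (A : Matrix m m ℂ) (x : m → ℂ) :
    ‖(WithLp.equiv 2 (m → ℂ)).symm (A *ᵥ x)‖ ≤ opNorm A * ‖(WithLp.equiv 2 (m → ℂ)).symm x‖ := by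
  have h := (Matrix.toEuclideanCLM (𝕜 := ℂ) A).le_opNorm ((WithLp.equiv 2 (m → ℂ)).symm x)
  exact h

theorem aux_norm_two {F : Type*} [NormedAddCommGroup F] [NormedSpace ℂ F] {a b : F} {δ : ℝ}
    (ha : ‖a‖ ≤ δ) (hb : ‖b‖ ≤ δ) : ‖a + Complex.I • b‖ ≤ 2 * δ := by
  have h1 : ‖a + Complex.I • b‖ ≤ ‖a‖ + ‖Complex.I • b‖ := norm_add_le _ _
  rw [norm_smul, Complex.norm_I, one_mul] at h1
  linarith

theorem opNorm_add_smul_le {A B : Matrix m m ℂ} {δ : ℝ} (hA : opNorm A ≤ δ)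
    (hB : opNorm B ≤ δ) : opNorm (A + Complex.I • B) ≤ 2 * δ := by
  unfold opNorm at *
  rw [map_add, _root_.map_smul]
  exact aux_norm_two hA hB

theorem sphS_sq (H₁ H₂ H₃ : Matrix m m ℂ) :
    sphS H₁ H₂ H₃ * sphS H₁ H₂ H₃ =
      fromBlocks
        (1 + ((H₁^2 + H₂^2 + H₃^2 - 1) + Complex.I • (H₁*H₂ - H₂*H₁)))
        (-(H₁*H₃ - H₃*H₁) + Complex.I • (H₂*H₃ - H₃*H₂))
        ((H₁*H₃ - H₃*H₁) + Complex.I • (H₂*H₃ - H₃*H₂))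
        (1 + ((H₁^2 + H₂^2 + H₃^2 - 1) - Complex.I • (H₁*H₂ - H₂*H₁))) := by
  have h11 : H₃ * H₃ + (H₁ - Complex.I • H₂) * (H₁ + Complex.I • H₂) =
      1 + ((H₁^2 + H₂^2 + H₃^2 - 1) + Complex.I • (H₁*H₂ - H₂*H₁)) := by
    simp only [Matrix.sub_mul, Matrix.add_mul, Matrix.mul_sub, Matrix.mul_add,
      Matrix.smul_mul, Matrix.mul_smul, smul_smul, Complex.I_mul_I, neg_one_smul,
      pow_two, smul_sub, smul_add, neg_neg]
    abel
  have h12 : H₃ * (H₁ - Complex.I • H₂) + (H₁ - Complex.I • H₂) * (-H₃) =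
      -(H₁*H₃ - H₃*H₁) + Complex.I • (H₂*H₃ - H₃*H₂) := by
    simp only [Matrix.sub_mul, Matrix.add_mul, Matrix.mul_sub, Matrix.mul_add,
      Matrix.smul_mul, Matrix.mul_smul, smul_smul, Complex.I_mul_I, neg_one_smul,
      Matrix.mul_neg, Matrix.neg_mul, pow_two, smul_sub, smul_add, neg_neg, neg_sub]
    abel
  have h21 : (H₁ + Complex.I • H₂) * H₃ + (-H₃) * (H₁ + Complex.I • H₂) =
      (H₁*H₃ - H₃*H₁) + Complex.I • (H₂*H₃ - H₃*H₂) := by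
    simp only [Matrix.sub_mul, Matrix.add_mul, Matrix.mul_sub, Matrix.mul_add,
      Matrix.smul_mul, Matrix.mul_smul, smul_smul, Complex.I_mul_I, neg_one_smul,
      Matrix.mul_neg, Matrix.neg_mul, pow_two, smul_sub, smul_add, neg_neg, smul_neg]
    abel
  have h22 : (H₁ + Complex.I • H₂) * (H₁ - Complex.I • H₂) + (-H₃) * (-H₃) =
      1 + ((H₁^2 + H₂^2 + H₃^2 - 1) - Complex.I • (H₁*H₂ - H₂*H₁)) := by
    simp only [Matrix.sub_mul, Matrix.add_mul, Matrix.mul_sub, Matrix.mul_add,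
      Matrix.smul_mul, Matrix.mul_smul, smul_smul, Complex.I_mul_I, neg_one_smul,
      Matrix.mul_neg, Matrix.neg_mul, pow_two, smul_sub, smul_add, neg_neg]
    abel
  unfold sphS
  rw [fromBlocks_multiply, h11, h12, h21, h22]

theorem opNorm_neg' (A : Matrix m m ℂ) : opNorm (-A) = opNorm A := by
  unfold opNorm; rw [map_neg, norm_neg]

theorem sphS_mulVec_eq_zero {δ : ℝ} (hδ0 : 0 ≤ δ) (hδ : δ < 1/4) {H₁ H₂ H₃ : Matrix m m ℂ}
    (hrep : IsSphereRep δ H₁ H₂ H₃) {v : m ⊕ m → ℂ}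
    (hv : (sphS H₁ H₂ H₃) *ᵥ v = 0) : v = 0 := by
  obtain ⟨h₁, h₂, h₃, hc12, hc13, hc23, hE⟩ := hrep
  set x : m → ℂ := fun i => v (Sum.inl i) with hx
  set y : m → ℂ := fun i => v (Sum.inr i) with hy
  have hvelim : v = Sum.elim x y := by funext i; cases i <;> rfl
  have hv2 : (sphS H₁ H₂ H₃ * sphS H₁ H₂ H₃) *ᵥ v = 0 := by
    rw [← Matrix.mulVec_mulVec, hv, Matrix.mulVec_zero]
  rw [sphS_sq, hvelim, Matrix.fromBlocks_mulVec] at hv2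
  have e1 : (1 + ((H₁^2 + H₂^2 + H₃^2 - 1) + Complex.I • (H₁*H₂ - H₂*H₁))) *ᵥ x
      + (-(H₁*H₃ - H₃*H₁) + Complex.I • (H₂*H₃ - H₃*H₂)) *ᵥ y = 0 := by
    funext i; exact congrFun hv2 (Sum.inl i)
  have e2 : ((H₁*H₃ - H₃*H₁) + Complex.I • (H₂*H₃ - H₃*H₂)) *ᵥ x
      + (1 + ((H₁^2 + H₂^2 + H₃^2 - 1) - Complex.I • (H₁*H₂ - H₂*H₁))) *ᵥ y = 0 := by
    funext i; exact congrFun hv2 (Sum.inr i)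
  have e1' : x = -(((H₁^2 + H₂^2 + H₃^2 - 1) + Complex.I • (H₁*H₂ - H₂*H₁)) *ᵥ x
      + (-(H₁*H₃ - H₃*H₁) + Complex.I • (H₂*H₃ - H₃*H₂)) *ᵥ y) := by
    rw [Matrix.add_mulVec, Matrix.one_mulVec] at e1
    linear_combination e1
  have e2' : y = -(((H₁*H₃ - H₃*H₁) + Complex.I • (H₂*H₃ - H₃*H₂)) *ᵥ x
      + ((H₁^2 + H₂^2 + H₃^2 - 1) - Complex.I • (H₁*H₂ - H₂*H₁)) *ᵥ y) := by
    rw [Matrix.add_mulVec (1 : Matrix m m ℂ), Matrix.one_mulVec] at e2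
    linear_combination e2
  have hb1 : opNorm ((H₁^2 + H₂^2 + H₃^2 - 1) + Complex.I • (H₁*H₂ - H₂*H₁)) ≤ 2*δ :=
    opNorm_add_smul_le hE hc12
  have hb2 : opNorm (-(H₁*H₃ - H₃*H₁) + Complex.I • (H₂*H₃ - H₃*H₂)) ≤ 2*δ := by
    refine opNorm_add_smul_le ?_ hc23
    rw [opNorm_neg']; exact hc13
  have hb3 : opNorm ((H₁*H₃ - H₃*H₁) + Complex.I • (H₂*H₃ - H₃*H₂)) ≤ 2*δ :=
    opNorm_add_smul_le hc13 hc23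
  have hb4 : opNorm ((H₁^2 + H₂^2 + H₃^2 - 1) - Complex.I • (H₁*H₂ - H₂*H₁)) ≤ 2*δ := by
    rw [sub_eq_add_neg, ← smul_neg]
    refine opNorm_add_smul_le hE ?_
    rw [opNorm_neg']; exact hc12
  have hX : ‖(WithLp.equiv 2 (m → ℂ)).symm x‖ ≤
      2*δ * ‖(WithLp.equiv 2 (m → ℂ)).symm x‖ + 2*δ * ‖(WithLp.equiv 2 (m → ℂ)).symm y‖ := by
    conv_lhs => rw [e1']
    rw [WithLp.equiv_symm_apply, WithLp.toLp_neg, norm_neg, WithLp.toLp_add]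
    refine (norm_add_le _ _).trans ?_
    exact add_le_add
      ((norm_mulVec_le _ _).trans (mul_le_mul_of_nonneg_right hb1 (norm_nonneg _)))
      ((norm_mulVec_le _ _).trans (mul_le_mul_of_nonneg_right hb2 (norm_nonneg _)))
  have hY : ‖(WithLp.equiv 2 (m → ℂ)).symm y‖ ≤
      2*δ * ‖(WithLp.equiv 2 (m → ℂ)).symm x‖ + 2*δ * ‖(WithLp.equiv 2 (m → ℂ)).symm y‖ := by
    conv_lhs => rw [e2']
    rw [WithLp.equiv_symm_apply, WithLp.toLp_neg, norm_neg, WithLp.toLp_add]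
    refine (norm_add_le _ _).trans ?_
    exact add_le_add
      ((norm_mulVec_le _ _).trans (mul_le_mul_of_nonneg_right hb3 (norm_nonneg _)))
      ((norm_mulVec_le _ _).trans (mul_le_mul_of_nonneg_right hb4 (norm_nonneg _)))
  have hXnn : (0:ℝ) ≤ ‖(WithLp.equiv 2 (m → ℂ)).symm x‖ := norm_nonneg _
  have hYnn : (0:ℝ) ≤ ‖(WithLp.equiv 2 (m → ℂ)).symm y‖ := norm_nonneg _
  have hX0 : ‖(WithLp.equiv 2 (m → ℂ)).symm x‖ = 0 := by nlinarith
  have hY0 : ‖(WithLp.equiv 2 (m → ℂ)).symm y‖ = 0 := by nlinarith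
  have hx0 : x = 0 := by
    have h := norm_eq_zero.mp hX0
    have := congrArg (WithLp.equiv 2 (m → ℂ)) h
    simpa using this
  have hy0 : y = 0 := by
    have h := norm_eq_zero.mp hY0
    have := congrArg (WithLp.equiv 2 (m → ℂ)) h
    simpa using this
  rw [hvelim, hx0, hy0]
  funext i; cases i <;> rfl

end AC

/-- Lemma (`lem:realsKillIndex`): if `(H₁,H₂,H₃)` is a δ-representation of the sphere
with `0 ≤ δ < 1/4` and all entries of `H₁, H₂, H₃` are real, then
`bott(H₁,H₂,H₃) = 0`. -/
theorem bott_of_real {n : ℕ} (δ : ℝ) (hδ0 : 0 ≤ δ) (hδ : δ < 1/4)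
    (H₁ H₂ H₃ : Matrix (Fin n) (Fin n) ℂ)
    (hrep : AC.IsSphereRep δ H₁ H₂ H₃)
    (hreal₁ : ∀ i j, (H₁ i j).im = 0)
    (hreal₂ : ∀ i j, (H₂ i j).im = 0)
    (hreal₃ : ∀ i j, (H₃ i j).im = 0) :
    AC.bott H₁ H₂ H₃ = 0 := by
  have r₁ : H₁.map (starRingEnd ℂ) = H₁ := by
    ext i j; have := hreal₁ i j; simp [Matrix.map_apply, Complex.ext_iff, this]
  have r₂ : H₂.map (starRingEnd ℂ) = H₂ := by
    ext i j; have := hreal₂ i j; simp [Matrix.map_apply, Complex.ext_iff, this]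
  have r₃ : H₃.map (starRingEnd ℂ) = H₃ := by
    ext i j; have := hreal₃ i j; simp [Matrix.map_apply, Complex.ext_iff, this]
  have hS : (AC.sphS H₁ H₂ H₃).IsHermitian :=
    AC.sphS_isHermitian hrep.1 hrep.2.1 hrep.2.2.1
  have hsame : (-(AC.sphS H₁ H₂ H₃)).charpoly = (AC.sphS H₁ H₂ H₃).charpoly := by
    rw [← AC.sphS_neg_conj r₁ r₂ r₃, AC.charpoly_conj_aux _ _ _ AC.VW_mul_one,
      Matrix.charpoly_map, AC.charpoly_hermitian_aux hS, Polynomial.map_prod]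
    apply Finset.prod_congr rfl
    intro i _
    simp [Polynomial.map_sub, Complex.conj_ofReal]
  have hsym := AC.eig_symm_aux hS hsame
  have hdet : (AC.sphS H₁ H₂ H₃).det ≠ 0 := by
    intro h
    obtain ⟨v, hv0, hv⟩ := Matrix.exists_mulVec_eq_zero_iff.mpr h
    exact hv0 (AC.sphS_mulVec_eq_zero hδ0 hδ hrep hv)
  have h0 : ∀ a ∈ (Finset.univ.val.map hS.eigenvalues), a ≠ 0 := by
    intro a ha ha0
    obtain ⟨i, _, rfl⟩ := Multiset.mem_map.mp ha
    apply hdet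
    rw [hS.det_eq_prod_eigenvalues]
    exact Finset.prod_eq_zero (Finset.mem_univ i) (by rw [ha0]; norm_num)
  have hcount := AC.count_pos_aux _ hsym h0
  have hcard2 : Multiset.card (Finset.univ.val.map hS.eigenvalues) = 2 * n := by
    rw [Multiset.card_map]
    show Finset.univ.card = 2 * n
    rw [Finset.card_univ, Fintype.card_sum, Fintype.card_fin]
    omega
  unfold AC.bott
  rw [dif_pos hS]
  have hfc : (Finset.univ.filter fun i => 0 < hS.eigenvalues i).card
      = Multiset.countP (fun a => 0 < a) (Finset.univ.val.map hS.eigenvalues) := by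
    rw [Multiset.countP_map, Finset.card_def, Finset.filter_val]
  rw [hfc]
  have : Multiset.countP (fun a => 0 < a) (Finset.univ.val.map hS.eigenvalues) = n := by
    omega
  rw [this]
  simp
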